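/- (Mountain Pass Theorem) Let (E, ‖·‖_E) be a real Banach space and let J : E → ℝ be Fréchet differentiable at every point, with derivative map J′ : E → E* continuous. Assume J(0) = 0 and that J satisfies the Palais–Smale condition: every sequence (u_j) in E with (J(u_j)) convergent in ℝ and ‖J′(u_j)‖_{E*} → 0 possesses a convergent subsequence. Suppose moreover: (I₁) there exist constants ρ > 0 and α > 0 such that J(u) ≥ α whenever ‖u‖_E = ρ; (I₂) there exists e ∈ E with ‖e‖_E > ρ and J(e) ≤ 0. Then, setting Γ := { γ : [0,1] → E continuous : γ(0) = 0 and γ(1) = e } and c := inf_{γ ∈ Γ} max_{t ∈ [0,1]} J(γ(t)), one has c ≥ α and c is a critical value of J, i.e., there exists u ∈ E with J(u) = c and J′(u) = 0. -/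

import Mathlib

open Filter Topology


/-- If `g` has derivative `≤ -c` on `[0,h]`, then `g h ≤ g 0 - c*h`. -/
lemma decrease_of_deriv_le {g g' : ℝ → ℝ} {c h : ℝ} (hh : 0 ≤ h)
    (hd : ∀ τ ∈ Set.Icc (0:ℝ) h, HasDerivAt g (g' τ) τ)
    (hb : ∀ τ ∈ Set.Icc (0:ℝ) h, g' τ ≤ -c) : g h ≤ g 0 - c * h := by
  have key : AntitoneOn (fun τ => g τ + c * τ) (Set.Icc 0 h) := by
    apply antitoneOn_of_deriv_nonpos (convex_Icc 0 h)
    · exact ContinuousOn.add (fun τ hτ => ((hd τ hτ).continuousAt).continuousWithinAt)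
        (continuous_const.mul continuous_id).continuousOn
    · intro τ hτ
      rw [interior_Icc] at hτ
      exact (((hd τ (Set.mem_Icc_of_Ioo hτ)).add ((hasDerivAt_id τ).const_mul c)).differentiableAt).differentiableWithinAt
    · intro τ hτ
      rw [interior_Icc] at hτ
      have hτ' := Set.mem_Icc_of_Ioo hτ
      have hD : HasDerivAt (fun τ => g τ + c * τ) (g' τ + c) τ := by
        have := (hd τ hτ').add ((hasDerivAt_id' τ).const_mul c); rw [mul_one] at this; exact this
      rw [hD.deriv]
      have := hb τ hτ'
      linarith
  have := key (Set.left_mem_Icc.2 hh) (Set.right_mem_Icc.2 hh) hh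
  simp only [mul_zero, add_zero] at this
  linarith


/-- Ekeland's variational principle (weak form). -/
lemma ekeland {X : Type*} [MetricSpace X] [CompleteSpace X] (f : X → ℝ)
    (hf : LowerSemicontinuous f) (hbdd : BddBelow (Set.range f)) {ε : ℝ} (hε : 0 < ε)
    (x₀ : X) :
    ∃ x, f x ≤ f x₀ ∧ ∀ y, f x ≤ f y + ε * dist x y := by
  classical
  -- the "slope" order sets
  set S : X → Set X := fun x => {y | f y + ε * dist x y ≤ f x} with hS
  have hself : ∀ x, x ∈ S x := by intro x; simp [hS]
  have htrans : ∀ {x y z}, y ∈ S x → z ∈ S y → z ∈ S x := by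
    intro x y z hy hz
    simp only [hS, Set.mem_setOf_eq] at *
    have htri : dist x z ≤ dist x y + dist y z := dist_triangle x y z
    nlinarith [dist_nonneg (x := x) (y := y), dist_nonneg (x := y) (y := z)]
  have hSne : ∀ x, (S x).Nonempty := fun x => ⟨x, hself x⟩
  have hbdd' : ∀ x, BddBelow (f '' S x) := fun x =>
    hbdd.mono (Set.image_subset_range f _)
  -- recursive choice
  have hchoice : ∀ n : ℕ, ∀ x : X, ∃ y, y ∈ S x ∧ f y < sInf (f '' S x) + (1/2)^n := by
    intro n x
    obtain ⟨m, hm, hlt⟩ := Real.lt_sInf_add_pos ((hSne x).image f) (by positivity :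
      (0:ℝ) < (1/2)^n)
    obtain ⟨y, hy, rfl⟩ := hm
    exact ⟨y, hy, hlt⟩
  let F : ℕ → X → X := fun n x => (hchoice n x).choose
  let u : ℕ → X := fun n => Nat.rec x₀ (fun n x => F n x) n
  have hu0 : u 0 = x₀ := rfl
  have husucc : ∀ n, u (n+1) = F n (u n) := fun n => rfl
  have hstep : ∀ n, u (n+1) ∈ S (u n) ∧ f (u (n+1)) < sInf (f '' S (u n)) + (1/2)^n :=
    fun n => (hchoice n (u n)).choose_spec
  -- chain: u m ∈ S (u n) for n ≤ m
  have hchain : ∀ n m, n ≤ m → u m ∈ S (u n) := by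
    intro n m hnm
    induction m with
    | zero => have : n = 0 := Nat.le_zero.mp hnm; subst this; exact hself _
    | succ m ih =>
      rcases Nat.lt_or_ge n (m+1) with h | h
      · exact htrans (ih (Nat.lt_succ_iff.mp h)) (hstep m).1
      · have : n = m + 1 := le_antisymm hnm h
        subst this; exact hself _
  have hfanti : ∀ n m, n ≤ m → f (u m) ≤ f (u n) := by
    intro n m hnm
    have := hchain n m hnm
    simp only [hS, Set.mem_setOf_eq] at this
    nlinarith [dist_nonneg (x := u n) (y := u m)]
  have hdist : ∀ n m, n ≤ m → ε * dist (u n) (u m) ≤ f (u n) - f (u m) := by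
    intro n m hnm
    have := hchain n m hnm
    simp only [hS, Set.mem_setOf_eq] at this
    linarith
  -- f ∘ u converges
  have hmono : Antitone (fun n => f (u n)) := fun n m h => hfanti n m h
  have hbl : BddBelow (Set.range fun n => f (u n)) :=
    hbdd.mono (by rintro _ ⟨n, rfl⟩; exact ⟨u n, rfl⟩)
  have hconv : ∃ l, Tendsto (fun n => f (u n)) atTop (𝓝 l) :=
    ⟨_, tendsto_atTop_ciInf hmono hbl⟩
  obtain ⟨l, hl⟩ := hconv
  have hcauchyf : CauchySeq (fun n => f (u n)) := hl.cauchySeq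
  -- u Cauchy
  have hucauchy : CauchySeq u := by
    rw [Metric.cauchySeq_iff]
    intro δ hδ
    rw [Metric.cauchySeq_iff] at hcauchyf
    obtain ⟨N, hN⟩ := hcauchyf (ε * δ) (by positivity)
    refine ⟨N, fun m hm n hn => ?_⟩
    rcases le_total n m with h | h
    · have h1 := hdist n m h
      have h2 := hN m hm n hn
      rw [Real.dist_eq, abs_lt] at h2
      rw [dist_comm]
      nlinarith
    · have h1 := hdist m n h
      have h2 := hN m hm n hn
      rw [Real.dist_eq, abs_lt] at h2
      nlinarith
  obtain ⟨x, hx⟩ := cauchySeq_tendsto_of_complete hucauchy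
  -- x ∈ S (u n) for all n, since S (u n) is closed
  have hSclosed : ∀ z, IsClosed (S z) := by
    intro z
    have : LowerSemicontinuous (fun y => f y + ε * dist z y) :=
      hf.add ((continuous_const.mul (continuous_const.dist continuous_id)).lowerSemicontinuous)
    exact this.isClosed_preimage (f z)
  have hxS : ∀ n, x ∈ S (u n) := by
    intro n
    refine (hSclosed (u n)).mem_of_tendsto (hx.comp (tendsto_add_atTop_nat n)) ?_
    filter_upwards with k
    exact hchain n (k + n) (Nat.le_add_left n k)
  have hxle : f x ≤ f x₀ := by
    have := hxS 0
    rw [hu0] at this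
    simp only [hS, Set.mem_setOf_eq] at this
    nlinarith [dist_nonneg (x := x₀) (y := x)]
  refine ⟨x, hxle, fun y => ?_⟩
  by_contra hy
  push_neg at hy
  -- y ∈ S x strictly; then y ∈ S (u n) for all n
  have hySx : y ∈ S x := by simp only [hS, Set.mem_setOf_eq]; linarith
  have hySn : ∀ n, y ∈ S (u n) := fun n => htrans (hxS n) hySx
  have hfxle : ∀ n, f x ≤ f y + (1/2)^n := by
    intro n
    have h1 : sInf (f '' S (u n)) ≤ f y := csInf_le (hbdd' (u n)) ⟨y, hySn n, rfl⟩
    have h2 := (hstep n).2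
    have h3 : f x ≤ f (u (n+1)) := by
      have := hxS (n+1)
      simp only [hS, Set.mem_setOf_eq] at this
      nlinarith [dist_nonneg (x := u (n+1)) (y := x)]
    linarith
  have hfinal : f x ≤ f y := by
    have htend : Tendsto (fun n : ℕ => f y + (1/2)^n) atTop (𝓝 (f y)) := by
      simpa using tendsto_const_nhds.add
        (tendsto_pow_atTop_nhds_zero_of_lt_one (by norm_num) (by norm_num) :
          Tendsto (fun n : ℕ => ((1:ℝ)/2)^n) atTop (𝓝 0))
    exact le_of_tendsto_of_tendsto' tendsto_const_nhds htend hfxle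
  nlinarith [mul_nonneg hε.le (dist_nonneg (x := x) (y := y))]

set_option maxHeartbeats 2000000 in
/-- Key step: a path satisfying the Ekeland inequality has an almost-critical
point at its maximum level. -/
lemma key_step {E : Type*} [NormedAddCommGroup E] [NormedSpace ℝ E]
    (J : E → ℝ) (J' : E → (E →L[ℝ] ℝ))
    (hdiff : ∀ u : E, HasFDerivAt J (J' u) u) (hcont : Continuous J')
    (γ : C(Set.Icc (0:ℝ) 1, E)) {ε : ℝ} (hε : 0 < ε) (mx : ℝ)
    (hub : ∀ s, J (γ s) ≤ mx) (hat : ∃ t, J (γ t) = mx)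
    (h0 : J (γ ⟨0, by norm_num⟩) < mx) (h1 : J (γ ⟨1, by norm_num⟩) < mx)
    (hek : ∀ σ : C(Set.Icc (0:ℝ) 1, E), σ ⟨0, by norm_num⟩ = γ ⟨0, by norm_num⟩ →
      σ ⟨1, by norm_num⟩ = γ ⟨1, by norm_num⟩ →
      mx ≤ (⨆ t : Set.Icc (0:ℝ) 1, J (σ t)) + ε * dist γ σ) :
    ∃ t, J (γ t) = mx ∧ ‖J' (γ t)‖ ≤ 2 * ε := by
  classical
  by_contra hcon
  push_neg at hcon
  have hJc : Continuous J := continuous_iff_continuousAt.2 fun u => (hdiff u).continuousAt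
  set g : Set.Icc (0:ℝ) 1 → ℝ := fun s => J (γ s) with hg
  have hgc : Continuous g := hJc.comp γ.continuous
  -- Step A: at each maximum point, a direction of steep increase on a ball
  have hgood : ∀ t : Set.Icc (0:ℝ) 1, g t = mx → ∃ (v : E) (r : ℝ), ‖v‖ ≤ 1 ∧ 0 < r ∧
      ∀ y : E, dist y (γ t) < r → (3/2)*ε < J' y v := by
    intro t ht
    have hbig : 2 * ε < ‖J' (γ t)‖ := hcon t ht
    have : ¬ ∀ u : E, ‖J' (γ t) u‖ ≤ 2 * ε * ‖u‖ := by
      intro hall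
      exact absurd (ContinuousLinearMap.opNorm_le_bound _ (by positivity) hall) (not_le.2 hbig)
    push_neg at this
    obtain ⟨u, hu⟩ := this
    have hune : u ≠ 0 := by
      intro h; rw [h] at hu; simp at hu; try linarith
    set w : E := ‖u‖⁻¹ • (if 0 ≤ J' (γ t) u then u else -u) with hw
    have hnu : (0:ℝ) < ‖u‖ := norm_pos_iff.2 hune
    have hwnorm : ‖w‖ ≤ 1 := by
      rw [hw, norm_smul]
      split_ifs <;> simp [norm_inv, abs_of_nonneg hnu.le, inv_mul_cancel₀ hnu.ne']
    have hwval : 2 * ε < J' (γ t) w := by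
      rw [hw]
      rw [map_smul]
      split_ifs with hsgn
      · rw [smul_eq_mul]
        have heq : ‖J' (γ t) u‖ = J' (γ t) u := by rw [Real.norm_eq_abs, abs_of_nonneg hsgn]
        rw [heq] at hu
        nlinarith [mul_lt_mul_of_pos_left hu (inv_pos.2 hnu), inv_mul_cancel₀ hnu.ne']
      · push_neg at hsgn
        rw [map_neg, smul_eq_mul]
        have heq : ‖J' (γ t) u‖ = -(J' (γ t) u) := by
          rw [Real.norm_eq_abs, abs_of_neg hsgn]
        rw [heq] at hu
        nlinarith [mul_lt_mul_of_pos_left hu (inv_pos.2 hnu), inv_mul_cancel₀ hnu.ne']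
    -- continuity gives a ball
    have hcontw : Continuous (fun y : E => J' y w) :=
      (ContinuousLinearMap.apply ℝ ℝ w).continuous.comp hcont
    have hopen : IsOpen {y : E | (3/2)*ε < J' y w} := isOpen_lt continuous_const hcontw
    have hmem : γ t ∈ {y : E | (3/2)*ε < J' y w} := by
      simp only [Set.mem_setOf_eq]; linarith
    obtain ⟨r, hr, hball⟩ := Metric.isOpen_iff.1 hopen _ hmem
    exact ⟨w, r, hwnorm, hr, fun y hy => hball hy⟩
  -- Step B: finite subcover of the maximum set
  set ι := {t : Set.Icc (0:ℝ) 1 // g t = mx} with hι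
  have hgood' : ∀ i : ι, ∃ (v : E) (r : ℝ), ‖v‖ ≤ 1 ∧ 0 < r ∧
      ∀ y : E, dist y (γ i.1) < r → (3/2)*ε < J' y v := fun i => hgood i.1 i.2
  set v : ι → E := fun i => (hgood' i).choose with hv
  have hvspec : ∀ i : ι, ∃ r : ℝ, ‖v i‖ ≤ 1 ∧ 0 < r ∧
      ∀ y : E, dist y (γ i.1) < r → (3/2)*ε < J' y (v i) := fun i => (hgood' i).choose_spec
  set rr : ι → ℝ := fun i => (hvspec i).choose with hrr
  have hrspec : ∀ i : ι, ‖v i‖ ≤ 1 ∧ 0 < rr i ∧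
      ∀ y : E, dist y (γ i.1) < rr i → (3/2)*ε < J' y (v i) := fun i => (hvspec i).choose_spec
  set U : ι → Set (Set.Icc (0:ℝ) 1) := fun i => {s | dist (γ s) (γ i.1) < rr i / 2} with hU
  have hUopen : ∀ i, IsOpen (U i) := fun i =>
    isOpen_lt ((γ.continuous.dist continuous_const)) continuous_const
  set M : Set (Set.Icc (0:ℝ) 1) := {t | g t = mx} with hM
  have hMcomp : IsCompact M :=
    (isClosed_eq hgc continuous_const).isCompact
  have hMcover : M ⊆ ⋃ i : ι, U i := by
    intro t ht
    exact Set.mem_iUnion.2 ⟨⟨t, ht⟩, by simp [hU, (hrspec ⟨t, ht⟩).2.1]⟩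
  obtain ⟨F, hF⟩ := hMcomp.elim_finite_subcover U hUopen hMcover
  -- the max is attained, so M and F are nonempty
  obtain ⟨t₀, ht₀⟩ := hat
  have ht₀M : t₀ ∈ M := ht₀
  have hFne : F.Nonempty := by
    obtain ⟨i, hi, -⟩ := Set.mem_iUnion₂.1 (hF ht₀M)
    exact ⟨i, hi⟩
  -- the minimal radius
  set r : ℝ := F.inf' hFne rr with hr
  have hrpos : 0 < r := by
    rw [hr, Finset.lt_inf'_iff]
    exact fun i _ => (hrspec i).2.1
  have hrle : ∀ i ∈ F, r ≤ rr i := fun i hi => Finset.inf'_le rr hi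
  -- Step C: find β > 0 controlling the complement of the cover and the endpoints
  set A : Set (Set.Icc (0:ℝ) 1) := ⋃ i ∈ F, U i with hA
  have hAopen : IsOpen A := isOpen_biUnion fun i _ => hUopen i
  have hβex : ∃ β : ℝ, 0 < β ∧ g ⟨0, by norm_num⟩ ≤ mx - β ∧ g ⟨1, by norm_num⟩ ≤ mx - β ∧
      ∀ s, s ∉ A → g s ≤ mx - β := by
    rcases Set.eq_empty_or_nonempty Aᶜ with hAc | hAc
    · refine ⟨min (mx - g ⟨0, by norm_num⟩) (mx - g ⟨1, by norm_num⟩), ?_, ?_, ?_, ?_⟩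
      · exact lt_min (by simpa [hg] using sub_pos.2 h0) (by simpa [hg] using sub_pos.2 h1)
      · have := min_le_left (mx - g ⟨0, by norm_num⟩) (mx - g ⟨1, by norm_num⟩); linarith
      · have := min_le_right (mx - g ⟨0, by norm_num⟩) (mx - g ⟨1, by norm_num⟩); linarith
      · intro s hs
        have hsA : s ∈ A := by
          have := Set.eq_empty_iff_forall_notMem.1 hAc s
          simpa using this
        exact absurd hsA hs
    · have hAcc : IsCompact Aᶜ := hAopen.isClosed_compl.isCompact
      obtain ⟨s₁, hs₁A, hs₁max⟩ := hAcc.exists_isMaxOn hAc hgc.continuousOn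
      have hs₁lt : g s₁ < mx := by
        rcases lt_or_eq_of_le (hub s₁) with h | h
        · exact h
        · exact absurd (hF (show s₁ ∈ M from h)) hs₁A
      refine ⟨min (min (mx - g ⟨0, by norm_num⟩) (mx - g ⟨1, by norm_num⟩)) (mx - g s₁),
        ?_, ?_, ?_, ?_⟩
      · exact lt_min (lt_min (by simpa [hg] using sub_pos.2 h0)
          (by simpa [hg] using sub_pos.2 h1)) (sub_pos.2 hs₁lt)
      · have := min_le_left (mx - g ⟨0, by norm_num⟩) (mx - g ⟨1, by norm_num⟩)
        have := min_le_left (min (mx - g ⟨0, by norm_num⟩) (mx - g ⟨1, by norm_num⟩)) (mx - g s₁)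
        linarith
      · have := min_le_right (mx - g ⟨0, by norm_num⟩) (mx - g ⟨1, by norm_num⟩)
        have := min_le_left (min (mx - g ⟨0, by norm_num⟩) (mx - g ⟨1, by norm_num⟩)) (mx - g s₁)
        linarith
      · intro s hs
        have h1' := hs₁max (show s ∈ Aᶜ from hs)
        have := min_le_right (min (mx - g ⟨0, by norm_num⟩) (mx - g ⟨1, by norm_num⟩)) (mx - g s₁)
        simp only [IsMaxOn, IsMaxFilter] at h1'
        linarith [show g s ≤ g s₁ from h1']
  obtain ⟨β, hβpos, hβ0, hβ1, hβA⟩ := hβex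
  -- Step D: the deformation
  set d : ι → Set.Icc (0:ℝ) 1 → ℝ := fun i s => max 0 (rr i / 2 - dist (γ s) (γ i.1)) with hd
  have hdcont : ∀ i : ι, Continuous (d i) := fun i =>
    continuous_const.max (continuous_const.sub (γ.continuous.dist continuous_const))
  have hdnonneg : ∀ i s, 0 ≤ d i s := fun i s => le_max_left _ _
  have hdpos_iff : ∀ i s, 0 < d i s ↔ dist (γ s) (γ i.1) < rr i / 2 := by
    intro i s
    constructor
    · intro h
      by_contra hc
      push_neg at hc
      have : d i s = 0 := max_eq_left (by linarith)
      linarith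
    · intro h
      have : 0 < rr i / 2 - dist (γ s) (γ i.1) := by linarith
      exact lt_max_of_lt_right this
  set D : Set.Icc (0:ℝ) 1 → ℝ := fun s => ∑ i ∈ F, d i s with hD
  have hDcont : Continuous D := continuous_finset_sum _ fun i _ => hdcont i
  have hDnonneg : ∀ s, 0 ≤ D s := fun s => Finset.sum_nonneg fun i _ => hdnonneg i s
  set K'' : Set (Set.Icc (0:ℝ) 1) := {s | mx - β/2 ≤ g s} with hK''
  have hK''A : K'' ⊆ A := by
    intro s hs
    by_contra h
    have := hβA s h
    simp only [hK'', Set.mem_setOf_eq] at hs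
    linarith
  have hK''comp : IsCompact K'' := (isClosed_le continuous_const hgc).isCompact
  have hDposK : ∀ s ∈ K'', 0 < D s := by
    intro s hs
    obtain ⟨i, hi, hsU⟩ := Set.mem_iUnion₂.1 (hK''A hs)
    exact Finset.sum_pos' (fun j _ => hdnonneg j s)
      ⟨i, hi, (hdpos_iff i s).2 hsU⟩
  have hK''ne : K''.Nonempty := ⟨t₀, by simp only [hK'', Set.mem_setOf_eq, hg]; linarith [ht₀]⟩
  obtain ⟨sm, hsmK, hsmmin⟩ := hK''comp.exists_isMinOn hK''ne hDcont.continuousOn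
  set m : ℝ := D sm with hm
  have hmpos : 0 < m := hDposK sm hsmK
  have hDgem : ∀ s ∈ K'', m ≤ D s := fun s hs => hsmmin hs
  set Q : Set.Icc (0:ℝ) 1 → ℝ := fun s => max (D s) m with hQ
  have hQpos : ∀ s, 0 < Q s := fun s => lt_of_lt_of_le hmpos (le_max_right _ _)
  have hQcont : Continuous Q := hDcont.max continuous_const
  have hDQle1 : ∀ s, D s / Q s ≤ 1 := fun s =>
    (div_le_one (hQpos s)).2 (le_max_left _ _)
  have hDQnonneg : ∀ s, 0 ≤ D s / Q s := fun s => div_nonneg (hDnonneg s) (hQpos s).le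
  -- cutoff function
  set χ : Set.Icc (0:ℝ) 1 → ℝ := fun s => min 1 (max 0 ((g s - (mx - β/2)) / (β/4))) with hχ
  have hχcont : Continuous χ :=
    continuous_const.min (continuous_const.max ((hgc.sub continuous_const).div_const _))
  have hχnonneg : ∀ s, 0 ≤ χ s := fun s => le_min (by norm_num) (le_max_left _ _)
  have hχle1 : ∀ s, χ s ≤ 1 := fun s => min_le_left _ _
  have hχzero : ∀ s, g s ≤ mx - β/2 → χ s = 0 := by
    intro s hs
    have hnum : (g s - (mx - β/2)) / (β/4) ≤ 0 :=
      div_nonpos_of_nonpos_of_nonneg (by linarith) (by linarith)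
    simp only [hχ]
    rw [max_eq_left hnum, min_eq_right (by norm_num)]
  have hχone : ∀ s, mx - β/4 ≤ g s → χ s = 1 := by
    intro s hs
    have hnum : (1:ℝ) ≤ (g s - (mx - β/2)) / (β/4) := by
      rw [le_div_iff₀ (by linarith)]
      linarith
    simp only [hχ]
    rw [max_eq_right (by linarith), min_eq_left hnum]
  have hχposK : ∀ s, 0 < χ s → s ∈ K'' := by
    intro s hs
    by_contra h
    simp only [hK'', Set.mem_setOf_eq, not_le] at h
    rw [hχzero s h.le] at hs
    exact lt_irrefl 0 hs
  -- the vector field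
  set W : Set.Icc (0:ℝ) 1 → E := fun s => ∑ i ∈ F, (d i s / Q s) • v i with hW
  set V : Set.Icc (0:ℝ) 1 → E := fun s => χ s • W s with hV
  have hWnorm : ∀ s, ‖W s‖ ≤ 1 := by
    intro s
    calc ‖W s‖ ≤ ∑ i ∈ F, ‖(d i s / Q s) • v i‖ := norm_sum_le _ _
      _ ≤ ∑ i ∈ F, d i s / Q s := by
          apply Finset.sum_le_sum
          intro i hi
          rw [norm_smul, Real.norm_eq_abs, abs_of_nonneg (div_nonneg (hdnonneg i s) (hQpos s).le)]
          calc d i s / Q s * ‖v i‖ ≤ d i s / Q s * 1 :=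
                mul_le_mul_of_nonneg_left (hrspec i).1 (div_nonneg (hdnonneg i s) (hQpos s).le)
            _ = d i s / Q s := mul_one _
      _ = D s / Q s := by rw [hD, Finset.sum_div]
      _ ≤ 1 := hDQle1 s
  have hVnorm : ∀ s, ‖V s‖ ≤ 1 := by
    intro s
    rw [hV]
    simp only
    rw [norm_smul, Real.norm_eq_abs, abs_of_nonneg (hχnonneg s)]
    calc χ s * ‖W s‖ ≤ 1 * 1 :=
      mul_le_mul (hχle1 s) (hWnorm s) (norm_nonneg _) (by norm_num)
      _ = 1 := one_mul 1
  have hVcont : Continuous V := hχcont.smul (continuous_finset_sum _ fun i _ =>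
    (((hdcont i).div hQcont fun s => (hQpos s).ne').smul continuous_const))
  -- step size
  set st : ℝ := min (r/2) (β/(6*ε)) with hst
  have hstpos : 0 < st := lt_min (by linarith) (by positivity)
  -- derivative estimate
  have hder : ∀ s, ∀ τ ∈ Set.Icc (0:ℝ) st,
      (3/2)*ε * (χ s * (D s / Q s)) ≤ J' (γ s - τ • V s) (V s) := by
    intro s τ hτ
    rcases eq_or_lt_of_le (hχnonneg s) with hχs | hχs
    · have hz : χ s = 0 := hχs.symm
      simp only [hV, hz, zero_smul, map_zero, smul_zero, sub_zero, mul_zero, zero_mul]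
      exact le_refl 0
    · set y := γ s - τ • V s with hy
      have hys : dist y (γ s) ≤ st := by
        rw [hy, dist_eq_norm]
        simp only [sub_sub_cancel_left, norm_neg, norm_smul, Real.norm_eq_abs,
          abs_of_nonneg hτ.1]
        calc τ * ‖V s‖ ≤ st * 1 :=
          mul_le_mul hτ.2 (hVnorm s) (norm_nonneg _) (by linarith [hstpos])
          _ = st := mul_one st
      have hsK : s ∈ K'' := hχposK s hχs
      have hterm : ∀ i ∈ F, (d i s / Q s) * ((3/2)*ε) ≤ (d i s / Q s) * J' y (v i) := by
        intro i hi
        rcases eq_or_lt_of_le (hdnonneg i s) with hdi | hdi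
        · rw [← hdi]; simp
        · have hsU : dist (γ s) (γ i.1) < rr i / 2 := (hdpos_iff i s).1 hdi
          have hyi : dist y (γ i.1) < rr i := by
            calc dist y (γ i.1) ≤ dist y (γ s) + dist (γ s) (γ i.1) := dist_triangle _ _ _
              _ < st + rr i / 2 := by linarith
              _ ≤ r/2 + rr i / 2 := by linarith [min_le_left (r/2) (β/(6*ε))]
              _ ≤ rr i / 2 + rr i / 2 := by linarith [hrle i hi]
              _ = rr i := by ring
          have := (hrspec i).2.2 y hyi
          exact mul_le_mul_of_nonneg_left this.le (div_nonneg (hdnonneg i s) (hQpos s).le)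
      have hexp : J' y (V s) = χ s * ∑ i ∈ F, (d i s / Q s) * J' y (v i) := by
        rw [hV]
        simp only
        rw [map_smul, smul_eq_mul, hW, map_sum]
        congr 1
        refine Finset.sum_congr rfl fun i _ => ?_
        rw [map_smul, smul_eq_mul]
      rw [hexp]
      have hsum : ∑ i ∈ F, (d i s / Q s) * ((3/2)*ε) ≤ ∑ i ∈ F, (d i s / Q s) * J' y (v i) :=
        Finset.sum_le_sum hterm
      have hlhs : ∑ i ∈ F, (d i s / Q s) * ((3/2)*ε) = (D s / Q s) * ((3/2)*ε) := by
        rw [← Finset.sum_mul, hD, Finset.sum_div]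
      calc (3/2)*ε * (χ s * (D s / Q s)) = χ s * ((D s / Q s) * ((3/2)*ε)) := by ring
        _ ≤ χ s * ∑ i ∈ F, (d i s / Q s) * J' y (v i) := by
            apply mul_le_mul_of_nonneg_left _ (hχnonneg s)
            rw [← hlhs]
            exact hsum
  -- decrease along the deformation
  have hdec : ∀ s, J (γ s - st • V s) ≤ g s - (3/2)*ε * (χ s * (D s / Q s)) * st := by
    intro s
    have hderiv : ∀ τ ∈ Set.Icc (0:ℝ) st,
        HasDerivAt (fun τ => J (γ s - τ • V s)) (-(J' (γ s - τ • V s) (V s))) τ := by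
      intro τ _
      have h1 : HasDerivAt (fun τ : ℝ => γ s - τ • V s) (-(V s)) τ := by
        simpa using ((hasDerivAt_id τ).smul_const (V s)).const_sub (γ s)
      have h2 := (hdiff (γ s - τ • V s)).comp_hasDerivAt τ h1
      simpa [Function.comp_def] using h2
    have hbound : ∀ τ ∈ Set.Icc (0:ℝ) st,
        (-(J' (γ s - τ • V s) (V s))) ≤ -((3/2)*ε * (χ s * (D s / Q s))) :=
      fun τ hτ => neg_le_neg (hder s τ hτ)
    have hkey := decrease_of_deriv_le (g := fun τ => J (γ s - τ • V s))
      (g' := fun τ => -(J' (γ s - τ • V s) (V s)))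
      (c := (3/2)*ε * (χ s * (D s / Q s))) hstpos.le hderiv hbound
    have h00 : J (γ s - (0:ℝ) • V s) = g s := by rw [zero_smul, sub_zero]
    calc J (γ s - st • V s)
        ≤ J (γ s - (0:ℝ) • V s) - (3/2)*ε * (χ s * (D s / Q s)) * st := hkey
      _ = g s - (3/2)*ε * (χ s * (D s / Q s)) * st := by rw [h00]
  -- the deformed path
  set σ : C(Set.Icc (0:ℝ) 1, E) :=
    ⟨fun s => γ s - st • V s, γ.continuous.sub (continuous_const.smul hVcont)⟩ with hσ
  have hσ0 : σ ⟨0, by norm_num⟩ = γ ⟨0, by norm_num⟩ := by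
    have : χ ⟨0, by norm_num⟩ = 0 := hχzero _ (by simp only [hg]; linarith [hβ0])
    simp only [hσ, ContinuousMap.coe_mk, hV, this, zero_smul, smul_zero, sub_zero]
  have hσ1 : σ ⟨1, by norm_num⟩ = γ ⟨1, by norm_num⟩ := by
    have : χ ⟨1, by norm_num⟩ = 0 := hχzero _ (by simp only [hg]; linarith [hβ1])
    simp only [hσ, ContinuousMap.coe_mk, hV, this, zero_smul, smul_zero, sub_zero]
  -- uniform bound on the deformed path
  have hstβ : (3/2)*ε*st ≤ β/4 := by
    have := min_le_right (r/2) (β/(6*ε))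
    calc (3/2)*ε*st ≤ (3/2)*ε*(β/(6*ε)) := by
          apply mul_le_mul_of_nonneg_left _ (by positivity)
          exact this
      _ = β/4 := by field_simp; ring
  have hσle : ∀ s, J (σ s) ≤ mx - (3/2)*ε*st := by
    intro s
    by_cases hsK : mx - β/4 ≤ g s
    · have hχ1s : χ s = 1 := hχone s hsK
      have hsK'' : s ∈ K'' := by simp only [hK'', Set.mem_setOf_eq]; linarith
      have hDQ1 : D s / Q s = 1 := by
        have hDm : m ≤ D s := hDgem s hsK''
        rw [hQ]
        simp only [max_eq_left hDm]
        exact div_self (by linarith [hmpos])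
      have := hdec s
      rw [hχ1s, hDQ1] at this
      simp only [mul_one, one_mul] at this
      calc J (σ s) = J (γ s - st • V s) := rfl
        _ ≤ g s - (3/2)*ε*st := by linarith
        _ ≤ mx - (3/2)*ε*st := by have := hub s; simp only [hg]; linarith
    · push_neg at hsK
      have hcnonneg : 0 ≤ (3/2)*ε * (χ s * (D s / Q s)) * st := by
        apply mul_nonneg (mul_nonneg (by positivity) (mul_nonneg (hχnonneg s) (hDQnonneg s)))
        exact hstpos.le
      calc J (σ s) = J (γ s - st • V s) := rfl
        _ ≤ g s - (3/2)*ε * (χ s * (D s / Q s)) * st := hdec s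
        _ ≤ g s := by linarith
        _ ≤ mx - β/4 := hsK.le
        _ ≤ mx - (3/2)*ε*st := by linarith
  have hsup : (⨆ t : Set.Icc (0:ℝ) 1, J (σ t)) ≤ mx - (3/2)*ε*st := ciSup_le hσle
  have hdistσ : dist γ σ ≤ st := by
    rw [ContinuousMap.dist_le hstpos.le]
    intro s
    rw [dist_eq_norm]
    simp only [hσ, ContinuousMap.coe_mk, sub_sub_cancel, norm_smul, Real.norm_eq_abs,
      abs_of_nonneg hstpos.le]
    calc st * ‖V s‖ ≤ st * 1 := mul_le_mul_of_nonneg_left (hVnorm s) hstpos.le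
      _ = st := mul_one st
  have hfinal := hek σ hσ0 hσ1
  have : ε * dist γ σ ≤ ε * st := mul_le_mul_of_nonneg_left hdistσ hε.le
  nlinarith [hstpos, hε]

set_option maxHeartbeats 1000000 in
/-- **Mountain Pass Theorem.**
Let `E` be a real Banach space and `J : E → ℝ` a `C¹` functional (Fréchet
differentiable everywhere with continuous derivative `J' : E → E*`) with
`J 0 = 0`, satisfying the Palais–Smale condition. If
`(I₁)` there are `ρ, α > 0` with `J u ≥ α` whenever `‖u‖ = ρ`, and
`(I₂)` there is `e` with `‖e‖ > ρ` and `J e ≤ 0`,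
then `c := inf_{γ ∈ Γ} max_{t ∈ [0,1]} J(γ t)` (over continuous paths `γ` from
`0` to `e`) satisfies `c ≥ α` and `c` is a critical value of `J`. -/
theorem mountain_pass_theorem
    {E : Type*} [NormedAddCommGroup E] [NormedSpace ℝ E] [CompleteSpace E]
    (J : E → ℝ) (J' : E → (E →L[ℝ] ℝ))
    (hdiff : ∀ u : E, HasFDerivAt J (J' u) u)
    (hcont : Continuous J')
    (hJ0 : J 0 = 0)
    (hPS : ∀ (u : ℕ → E) (μ : ℝ),
      Tendsto (fun j => J (u j)) atTop (𝓝 μ) →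
      Tendsto (fun j => ‖J' (u j)‖) atTop (𝓝 0) →
      ∃ (φ : ℕ → ℕ) (v : E), StrictMono φ ∧
        Tendsto (fun k => u (φ k)) atTop (𝓝 v))
    (ρ α : ℝ) (hρ : 0 < ρ) (hα : 0 < α)
    (hI1 : ∀ u : E, ‖u‖ = ρ → α ≤ J u)
    (e : E) (he : ρ < ‖e‖) (hJe : J e ≤ 0) :
    ∃ c : ℝ,
      c = sInf {m : ℝ | ∃ γ : C(Set.Icc (0:ℝ) 1, E),
        γ ⟨0, by norm_num⟩ = 0 ∧ γ ⟨1, by norm_num⟩ = e ∧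
        m = ⨆ t : Set.Icc (0:ℝ) 1, J (γ t)} ∧
      α ≤ c ∧ ∃ u : E, J u = c ∧ J' u = 0 := by
  classical
  have hJc : Continuous J := continuous_iff_continuousAt.2 fun u => (hdiff u).continuousAt
  set t0 : Set.Icc (0:ℝ) 1 := ⟨0, by norm_num⟩ with ht0
  set t1 : Set.Icc (0:ℝ) 1 := ⟨1, by norm_num⟩ with ht1
  -- the path space
  set Γ : Set C(Set.Icc (0:ℝ) 1, E) := {γ | γ t0 = 0 ∧ γ t1 = e} with hΓ
  have hΓclosed : IsClosed Γ :=
    (isClosed_eq (continuous_eval_const t0) continuous_const).inter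
      (isClosed_eq (continuous_eval_const t1) continuous_const)
  haveI : CompleteSpace Γ := hΓclosed.completeSpace_coe
  -- the max functional
  have hmaxex : ∀ γ : C(Set.Icc (0:ℝ) 1, E), ∃ tm, ∀ t, J (γ t) ≤ J (γ tm) := by
    intro γ
    obtain ⟨tm, -, h⟩ := isCompact_univ.exists_isMaxOn Set.univ_nonempty
      ((hJc.comp γ.continuous)).continuousOn
    exact ⟨tm, fun t => h (Set.mem_univ t)⟩
  have hbddA : ∀ γ : C(Set.Icc (0:ℝ) 1, E), BddAbove (Set.range fun t => J (γ t)) := by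
    intro γ
    obtain ⟨tm, h⟩ := hmaxex γ
    exact ⟨J (γ tm), by rintro _ ⟨t, rfl⟩; exact h t⟩
  have hsup_eq : ∀ γ : C(Set.Icc (0:ℝ) 1, E), ∀ tm, (∀ t, J (γ t) ≤ J (γ tm)) →
      (⨆ t : Set.Icc (0:ℝ) 1, J (γ t)) = J (γ tm) := fun γ tm h =>
    le_antisymm (ciSup_le h) (le_ciSup (hbddA γ) tm)
  set Φ : Γ → ℝ := fun p => ⨆ t : Set.Icc (0:ℝ) 1, J (p.1 t) with hΦ
  have hΦub : ∀ (p : Γ) (t : Set.Icc (0:ℝ) 1), J (p.1 t) ≤ Φ p :=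
    fun p t => le_ciSup (hbddA p.1) t
  have hΦat : ∀ p : Γ, ∃ tm, J (p.1 tm) = Φ p := by
    intro p
    obtain ⟨tm, h⟩ := hmaxex p.1
    exact ⟨tm, (hsup_eq p.1 tm h).symm⟩
  -- Φ ≥ α via the intermediate value theorem
  have hΦα : ∀ p : Γ, α ≤ Φ p := by
    intro p
    obtain ⟨hp0, hp1⟩ := p.2
    set f : ℝ → ℝ := fun x => ‖p.1 (Set.projIcc 0 1 (by norm_num) x)‖ with hf
    have hfc : Continuous f :=
      continuous_norm.comp (p.1.continuous.comp continuous_projIcc)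
    have hf0 : f 0 = 0 := by
      simp only [hf, Set.projIcc_left]
      rw [show (⟨0, Set.left_mem_Icc.2 (by norm_num)⟩ : Set.Icc (0:ℝ) 1) = t0 from rfl, hp0,
        norm_zero]
    have hf1 : f 1 = ‖e‖ := by
      simp only [hf, Set.projIcc_right]
      rw [show (⟨1, Set.right_mem_Icc.2 (by norm_num)⟩ : Set.Icc (0:ℝ) 1) = t1 from rfl, hp1]
    have hsub := intermediate_value_Icc (by norm_num : (0:ℝ) ≤ 1) hfc.continuousOn
    have hρmem : ρ ∈ Set.Icc (f 0) (f 1) := by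
      rw [hf0, hf1]; exact ⟨hρ.le, he.le⟩
    obtain ⟨x, hx, hfx⟩ := hsub hρmem
    have : α ≤ J (p.1 (Set.projIcc 0 1 (by norm_num) x)) := hI1 _ hfx
    exact this.trans (hΦub p _)
  -- Φ is lower semicontinuous
  have hΦlsc : LowerSemicontinuous Φ := by
    intro p y hy
    obtain ⟨tm, htm⟩ := hΦat p
    have hylt : y < J (p.1 tm) := htm.symm ▸ hy
    have hcmt : Continuous fun q : Γ => J (q.1 tm) :=
      hJc.comp ((continuous_eval_const tm).comp continuous_subtype_val)
    have hev : ∀ᶠ q : Γ in 𝓝 p, y < J (q.1 tm) :=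
      (isOpen_lt continuous_const hcmt).mem_nhds hylt
    filter_upwards [hev] with q hq
    exact hq.trans_le (hΦub q tm)
  -- the candidate set equals the range of Φ
  set S : Set ℝ := {m : ℝ | ∃ γ : C(Set.Icc (0:ℝ) 1, E),
    γ ⟨0, by norm_num⟩ = 0 ∧ γ ⟨1, by norm_num⟩ = e ∧
    m = ⨆ t : Set.Icc (0:ℝ) 1, J (γ t)} with hS
  have hSrange : S = Set.range Φ := by
    ext m
    constructor
    · rintro ⟨γ, hγ0, hγ1, rfl⟩
      exact ⟨⟨γ, hγ0, hγ1⟩, rfl⟩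
    · rintro ⟨⟨γ, hγ0, hγ1⟩, rfl⟩
      exact ⟨γ, hγ0, hγ1, rfl⟩
  have hSne : S.Nonempty := by
    refine ⟨_, ⟨⟨fun t => (t : ℝ) • e, by fun_prop⟩, ?_, ?_, rfl⟩⟩
    · simp
    · simp
  have hSbdd : BddBelow S := by
    rw [hSrange]
    exact ⟨α, by rintro _ ⟨p, rfl⟩; exact hΦα p⟩
  set c : ℝ := sInf S with hc
  have hcα : α ≤ c := le_csInf hSne (by
    rw [hSrange]; rintro _ ⟨p, rfl⟩; exact hΦα p)
  have hcle : ∀ p : Γ, c ≤ Φ p := by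
    intro p
    apply csInf_le hSbdd
    rw [hSrange]; exact ⟨p, rfl⟩
  -- construct the Palais-Smale sequence
  have hseq : ∀ j : ℕ, ∃ u : E, c ≤ J u ∧ J u < c + 1/(j+1) ∧ ‖J' u‖ ≤ 2 * (1/(j+1)) := by
    intro j
    have hεj : (0:ℝ) < 1/(j+1) := by positivity
    obtain ⟨m, hmS, hmlt⟩ := Real.lt_sInf_add_pos hSne hεj
    rw [hSrange] at hmS
    obtain ⟨p, rfl⟩ := hmS
    obtain ⟨q, hqle, hqek⟩ := ekeland Φ hΦlsc
      (by rw [← hSrange]; exact hSbdd) hεj p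
    have hq0 : q.1 t0 = 0 := q.2.1
    have hq1 : q.1 t1 = e := q.2.2
    have h0' : J (q.1 t0) < Φ q := by
      rw [hq0, hJ0]; linarith [hΦα q]
    have h1' : J (q.1 t1) < Φ q := by
      rw [hq1]; linarith [hΦα q]
    have hekk : ∀ σ : C(Set.Icc (0:ℝ) 1, E), σ ⟨0, by norm_num⟩ = q.1 ⟨0, by norm_num⟩ →
        σ ⟨1, by norm_num⟩ = q.1 ⟨1, by norm_num⟩ →
        Φ q ≤ (⨆ t : Set.Icc (0:ℝ) 1, J (σ t)) + (1/(j+1)) * dist q.1 σ := by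
      intro σ hσ0 hσ1
      have hσΓ : σ ∈ Γ := ⟨by rw [show t0 = (⟨0, by norm_num⟩ : Set.Icc (0:ℝ) 1) from rfl,
        hσ0, ← ht0, hq0], by rw [show t1 = (⟨1, by norm_num⟩ : Set.Icc (0:ℝ) 1) from rfl,
        hσ1, ← ht1, hq1]⟩
      have h := hqek ⟨σ, hσΓ⟩
      rwa [Subtype.dist_eq] at h
    obtain ⟨t, htmax, htnorm⟩ := key_step J J' hdiff hcont q.1 hεj (Φ q)
      (fun s => hΦub q s) (hΦat q) h0' h1' hekk
    refine ⟨q.1 t, ?_, ?_, htnorm⟩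
    · rw [htmax]; exact hcle q
    · rw [htmax]
      calc Φ q ≤ Φ p := hqle
        _ < c + 1/(j+1) := hmlt
  choose u hu1 hu2 hu3 using hseq
  -- convergence of the sequence
  have htend1 : Tendsto (fun j : ℕ => c + 1/(j+1:ℝ)) atTop (𝓝 c) := by
    have : Tendsto (fun n : ℕ => 1 / ((n : ℝ) + 1)) atTop (𝓝 0) := tendsto_one_div_add_atTop_nhds_zero_nat
    simpa using tendsto_const_nhds.add this
  have htendJ : Tendsto (fun j => J (u j)) atTop (𝓝 c) :=
    tendsto_of_tendsto_of_tendsto_of_le_of_le tendsto_const_nhds htend1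
      (fun j => hu1 j) (fun j => (hu2 j).le)
  have htendJ' : Tendsto (fun j => ‖J' (u j)‖) atTop (𝓝 0) := by
    apply squeeze_zero (fun j => norm_nonneg _) (fun j => hu3 j)
    have : Tendsto (fun n : ℕ => 1 / ((n : ℝ) + 1)) atTop (𝓝 0) := tendsto_one_div_add_atTop_nhds_zero_nat
    simpa using this.const_mul 2
  obtain ⟨φ, v, hφ, hv⟩ := hPS u c htendJ htendJ'
  have hJv : J v = c := by
    have h1' : Tendsto (fun k => J (u (φ k))) atTop (𝓝 (J v)) :=
      (hJc.continuousAt.tendsto).comp hv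
    have h2' : Tendsto (fun k => J (u (φ k))) atTop (𝓝 c) :=
      htendJ.comp hφ.tendsto_atTop
    exact tendsto_nhds_unique h1' h2'
  have hJ'v : J' v = 0 := by
    have h1' : Tendsto (fun k => ‖J' (u (φ k))‖) atTop (𝓝 ‖J' v‖) :=
      (continuous_norm.comp hcont).continuousAt.tendsto.comp hv
    have h2' : Tendsto (fun k => ‖J' (u (φ k))‖) atTop (𝓝 0) :=
      htendJ'.comp hφ.tendsto_atTop
    have : ‖J' v‖ = 0 := tendsto_nhds_unique h1' h2'
    exact norm_eq_zero.1 this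
  exact ⟨c, rfl, hcα, v, hJv, hJ'v⟩
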